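/- For any complex numbers a, b with a, b, a+b not integers, Γ(a)Γ(1-a-b)/Γ(1-b) + Γ(b)Γ(1-a-b)/Γ(1-a) − Γ(a)Γ(b)/Γ(a+b) = √π · (Γ((1-a-b)/2)/Γ((a+b)/2)) · (Γ((1+a)/2)/Γ((2-a)/2)) · (Γ((1+b)/2)/Γ((2-b)/2)). -/

import Mathlib

open Complex

private lemma sin_pi_ne (z : ℂ) (hz : ∀ n : ℤ, z ≠ n) :
    Complex.sin ((Real.pi : ℂ) * z) ≠ 0 := by
  intro h
  rw [Complex.sin_eq_zero_iff] at h
  obtain ⟨k, hk⟩ := h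
  have hπ : (Real.pi : ℂ) ≠ 0 := by simpa using Real.pi_ne_zero
  apply hz k
  rw [mul_comm ((k : ℂ)) _] at hk
  exact mul_left_cancel₀ hπ hk

private lemma Gamma_ne (z : ℂ) (hz : ∀ n : ℤ, z ≠ n) : Complex.Gamma z ≠ 0 := by
  apply Complex.Gamma_ne_zero
  intro m
  simpa using hz (-(m : ℤ))

theorem gamma_identity_minus (a b : ℂ) (ha : ∀ n : ℤ, a ≠ n) (hb : ∀ n : ℤ, b ≠ n)
    (hab : ∀ n : ℤ, a + b ≠ n) :
    Complex.Gamma a * Complex.Gamma (1 - a - b) / Complex.Gamma (1 - b)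
      + Complex.Gamma b * Complex.Gamma (1 - a - b) / Complex.Gamma (1 - a)
      - Complex.Gamma a * Complex.Gamma b / Complex.Gamma (a + b)
    = (Real.sqrt Real.pi : ℂ)
      * (Complex.Gamma ((1 - a - b) / 2) / Complex.Gamma ((a + b) / 2))
      * (Complex.Gamma ((1 + a) / 2) / Complex.Gamma ((2 - a) / 2))
      * (Complex.Gamma ((1 + b) / 2) / Complex.Gamma ((2 - b) / 2)) := by
  have hπ : (Real.pi : ℂ) ≠ 0 := by simpa using Real.pi_ne_zero
  have hsπ : ((Real.sqrt Real.pi : ℝ) : ℂ) ≠ 0 := by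
    simpa using Real.sqrt_ne_zero'.mpr Real.pi_pos
  have hsπ2 : ((Real.sqrt Real.pi : ℝ) : ℂ) * ((Real.sqrt Real.pi : ℝ) : ℂ) = (Real.pi : ℂ) := by
    rw [← Complex.ofReal_mul, Real.mul_self_sqrt Real.pi_pos.le]
  -- non-integer facts
  have h1a : ∀ n : ℤ, 1 - a ≠ n := fun n h => ha (1 - n) (by push_cast; linear_combination -h)
  have h1b : ∀ n : ℤ, 1 - b ≠ n := fun n h => hb (1 - n) (by push_cast; linear_combination -h)
  have hha : ∀ n : ℤ, a / 2 ≠ n := fun n h => ha (2 * n) (by push_cast; linear_combination 2 * h)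
  have hhb : ∀ n : ℤ, b / 2 ≠ n := fun n h => hb (2 * n) (by push_cast; linear_combination 2 * h)
  have hhs : ∀ n : ℤ, (a + b) / 2 ≠ n := fun n h => hab (2 * n) (by push_cast; linear_combination 2 * h)
  have h2a : ∀ n : ℤ, 1 - a / 2 ≠ n := fun n h => ha (2 - 2 * n) (by push_cast; linear_combination -2 * h)
  have h2b : ∀ n : ℤ, 1 - b / 2 ≠ n := fun n h => hb (2 - 2 * n) (by push_cast; linear_combination -2 * h)
  have h1s2 : ∀ n : ℤ, 1 - (a + b) / 2 ≠ n := fun n h => hab (2 - 2 * n) (by push_cast; linear_combination -2 * h)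
  -- Gamma nonvanishing
  have g1a := Gamma_ne _ h1a
  have g1b := Gamma_ne _ h1b
  have gab := Gamma_ne _ hab
  have gsh := Gamma_ne _ hhs
  have ga2 := Gamma_ne _ hha
  have gb2 := Gamma_ne _ hhb
  have g1a2 := Gamma_ne _ h2a
  have g1b2 := Gamma_ne _ h2b
  have g1s2 := Gamma_ne _ h1s2
  -- sin nonvanishing
  have sA := sin_pi_ne _ ha
  have sB := sin_pi_ne _ hb
  have sS := sin_pi_ne _ hab
  have sA2 := sin_pi_ne _ hha
  have sB2 := sin_pi_ne _ hhb
  have sS2 := sin_pi_ne _ hhs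
  -- reflection formulas (multiplied out)
  have refl_a := Complex.Gamma_mul_Gamma_one_sub a
  rw [eq_div_iff sA] at refl_a
  have refl_b := Complex.Gamma_mul_Gamma_one_sub b
  rw [eq_div_iff sB] at refl_b
  have refl_s := Complex.Gamma_mul_Gamma_one_sub (a + b)
  rw [eq_div_iff sS, show (1 : ℂ) - (a + b) = 1 - a - b by ring] at refl_s
  have refl_a2 := Complex.Gamma_mul_Gamma_one_sub (a / 2)
  rw [eq_div_iff sA2] at refl_a2
  have refl_b2 := Complex.Gamma_mul_Gamma_one_sub (b / 2)
  rw [eq_div_iff sB2] at refl_b2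
  have refl_s2 := Complex.Gamma_mul_Gamma_one_sub ((a + b) / 2)
  rw [eq_div_iff sS2] at refl_s2
  -- duplication formulas
  have dup_a := Complex.Gamma_mul_Gamma_add_half (a / 2)
  rw [show 2 * (a / 2) = a by ring] at dup_a
  have dup_b := Complex.Gamma_mul_Gamma_add_half (b / 2)
  rw [show 2 * (b / 2) = b by ring] at dup_b
  have dup_s := Complex.Gamma_mul_Gamma_add_half ((1 - a - b) / 2)
  rw [show 2 * ((1 - a - b) / 2) = 1 - a - b by ring,
    show (1 : ℂ) - (1 - a - b) = a + b by ring,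
    show (1 - a - b) / 2 + 1 / 2 = 1 - (a + b) / 2 by ring] at dup_s
  -- LHS terms
  have t1 : Gamma a * Gamma (1 - a - b) / Gamma (1 - b)
      = Gamma a * Gamma b * Gamma (1 - a - b) * Complex.sin ((Real.pi : ℂ) * b) / Real.pi := by
    rw [div_eq_div_iff g1b hπ]
    linear_combination -(Gamma a * Gamma (1 - a - b)) * refl_b
  have t2 : Gamma b * Gamma (1 - a - b) / Gamma (1 - a)
      = Gamma a * Gamma b * Gamma (1 - a - b) * Complex.sin ((Real.pi : ℂ) * a) / Real.pi := by
    rw [div_eq_div_iff g1a hπ]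
    linear_combination -(Gamma b * Gamma (1 - a - b)) * refl_a
  have t3 : Gamma a * Gamma b / Gamma (a + b)
      = Gamma a * Gamma b * Gamma (1 - a - b) * Complex.sin ((Real.pi : ℂ) * (a + b)) / Real.pi := by
    rw [div_eq_div_iff gab hπ]
    linear_combination -(Gamma a * Gamma b) * refl_s
  -- RHS factors
  have r1 : Gamma ((1 + a) / 2) / Gamma ((2 - a) / 2)
      = Gamma a * Complex.sin ((Real.pi : ℂ) * (a / 2)) * 2 ^ (1 - a)
        / ((Real.sqrt Real.pi : ℝ) : ℂ) := by
    rw [show (1 + a) / 2 = a / 2 + 1 / 2 by ring, show (2 - a) / 2 = 1 - a / 2 by ring,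
      div_eq_div_iff g1a2 hsπ]
    apply mul_left_cancel₀ ga2
    linear_combination ((Real.sqrt Real.pi : ℝ) : ℂ) * dup_a
      - (Gamma a * 2 ^ (1 - a)) * refl_a2 + (Gamma a * 2 ^ (1 - a)) * hsπ2
  have r2 : Gamma ((1 + b) / 2) / Gamma ((2 - b) / 2)
      = Gamma b * Complex.sin ((Real.pi : ℂ) * (b / 2)) * 2 ^ (1 - b)
        / ((Real.sqrt Real.pi : ℝ) : ℂ) := by
    rw [show (1 + b) / 2 = b / 2 + 1 / 2 by ring, show (2 - b) / 2 = 1 - b / 2 by ring,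
      div_eq_div_iff g1b2 hsπ]
    apply mul_left_cancel₀ gb2
    linear_combination ((Real.sqrt Real.pi : ℝ) : ℂ) * dup_b
      - (Gamma b * 2 ^ (1 - b)) * refl_b2 + (Gamma b * 2 ^ (1 - b)) * hsπ2
  have r3 : Gamma ((1 - a - b) / 2) / Gamma ((a + b) / 2)
      = Gamma (1 - a - b) * Complex.sin ((Real.pi : ℂ) * ((a + b) / 2)) * 2 ^ (a + b)
        / ((Real.sqrt Real.pi : ℝ) : ℂ) := by
    rw [div_eq_div_iff gsh hsπ]
    apply mul_left_cancel₀ g1s2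
    linear_combination ((Real.sqrt Real.pi : ℝ) : ℂ) * dup_s
      - (Gamma (1 - a - b) * 2 ^ (a + b)) * refl_s2
      + (Gamma (1 - a - b) * 2 ^ (a + b)) * hsπ2
  -- trig expansions
  have e1 : Complex.sin ((Real.pi : ℂ) * a)
      = 2 * Complex.sin ((Real.pi : ℂ) * (a / 2)) * Complex.cos ((Real.pi : ℂ) * (a / 2)) := by
    rw [show (Real.pi : ℂ) * a = 2 * ((Real.pi : ℂ) * (a / 2)) by ring, Complex.sin_two_mul]
  have e2 : Complex.sin ((Real.pi : ℂ) * b)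
      = 2 * Complex.sin ((Real.pi : ℂ) * (b / 2)) * Complex.cos ((Real.pi : ℂ) * (b / 2)) := by
    rw [show (Real.pi : ℂ) * b = 2 * ((Real.pi : ℂ) * (b / 2)) by ring, Complex.sin_two_mul]
  have e3 : Complex.sin ((Real.pi : ℂ) * (a + b))
      = 2 * Complex.sin ((Real.pi : ℂ) * ((a + b) / 2))
        * Complex.cos ((Real.pi : ℂ) * ((a + b) / 2)) := by
    rw [show (Real.pi : ℂ) * (a + b) = 2 * ((Real.pi : ℂ) * ((a + b) / 2)) by ring,
      Complex.sin_two_mul]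
  have e4 : Complex.sin ((Real.pi : ℂ) * ((a + b) / 2))
      = Complex.sin ((Real.pi : ℂ) * (a / 2)) * Complex.cos ((Real.pi : ℂ) * (b / 2))
        + Complex.cos ((Real.pi : ℂ) * (a / 2)) * Complex.sin ((Real.pi : ℂ) * (b / 2)) := by
    rw [show (Real.pi : ℂ) * ((a + b) / 2)
      = (Real.pi : ℂ) * (a / 2) + (Real.pi : ℂ) * (b / 2) by ring, Complex.sin_add]
  have e5 : Complex.cos ((Real.pi : ℂ) * ((a + b) / 2))
      = Complex.cos ((Real.pi : ℂ) * (a / 2)) * Complex.cos ((Real.pi : ℂ) * (b / 2))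
        - Complex.sin ((Real.pi : ℂ) * (a / 2)) * Complex.sin ((Real.pi : ℂ) * (b / 2)) := by
    rw [show (Real.pi : ℂ) * ((a + b) / 2)
      = (Real.pi : ℂ) * (a / 2) + (Real.pi : ℂ) * (b / 2) by ring, Complex.cos_add]
  have pa := Complex.sin_sq_add_cos_sq ((Real.pi : ℂ) * (a / 2))
  have pb := Complex.sin_sq_add_cos_sq ((Real.pi : ℂ) * (b / 2))
  have hpow : (2 : ℂ) ^ (a + b) * 2 ^ (1 - a) * 2 ^ (1 - b) = 4 := by
    rw [← Complex.cpow_add _ _ two_ne_zero, ← Complex.cpow_add _ _ two_ne_zero,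
      show a + b + (1 - a) + (1 - b) = (2 : ℂ) by ring]
    norm_num
  rw [t1, t2, t3, r1, r2, r3, e1, e2, e3, e4, e5]
  field_simp
  have pa2 := Complex.sin_sq_add_cos_sq (a * (Real.pi : ℂ) / 2)
  have pb2 := Complex.sin_sq_add_cos_sq (b * (Real.pi : ℂ) / 2)
  set sA' := Complex.sin (a * (Real.pi : ℂ) / 2) with hsA'
  set cA' := Complex.cos (a * (Real.pi : ℂ) / 2) with hcA'
  set sB' := Complex.sin (b * (Real.pi : ℂ) / 2) with hsB'
  set cB' := Complex.cos (b * (Real.pi : ℂ) / 2) with hcB'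
  set G := Gamma a * Gamma b * Gamma (1 - a - b) with hG
  linear_combination
    (G * (2 * sB' * cB' + 2 * sA' * cA'
        - 2 * (sA' * cB' + cA' * sB') * (cA' * cB' - sA' * sB'))) * hsπ2
    - (G * (sA' * sB' * (sA' * cB' + cA' * sB')) * (Real.pi : ℂ)) * hpow
    - (G * (Real.pi : ℂ) * 2 * sB' * cB') * pa2
    - (G * (Real.pi : ℂ) * 2 * sA' * cA') * pb2
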